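/- Let m ≥ 1, ζ > 0, and let x, y ∈ ℝ_{≥0}^m with x_i > ζ for every i and ‖y − x‖_∞ ≤ ζ. Then G(y) ≥ G(x) − ζ·Σ_{i=1}^m ln(‖x‖₁/x_i) − (ζ²/2)·( Σ_{i=1}^m 1/(x_i − ζ) − m/(‖x‖₁/m − ζ) ), where ‖x‖₁ = Σ_i x_i. Moreover, the coefficient Σ_{i=1}^m 1/(x_i − ζ) − m/(‖x‖₁/m − ζ) of ζ² is nonnegative, and it equals 0 exactly when all the x_i are equal. -/

import Mathlib

open scoped BigOperators

/-- Generalized entropy `G(x) = -∑ xᵢ ln xᵢ + (∑ xᵢ) ln (∑ xᵢ)`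
(with the convention `0 ln 0 = 0`, automatic since `Real.log 0 = 0`). -/
noncomputable def genEntropy {m : ℕ} (x : Fin m → ℝ) : ℝ :=
  -(∑ i, x i * Real.log (x i)) + (∑ i, x i) * Real.log (∑ i, x i)


lemma aux_upper {s : ℝ} (hs : 1 ≤ s) : s * Real.log s ≤ (s - 1) + (s - 1)^2 / 2 := by
  set g : ℝ → ℝ := fun r => (r - 1) + (r - 1)^2/2 - r * Real.log r with hg
  have hd : ∀ t ∈ interior (Set.Ici (1:ℝ)), HasDerivAt g (t - 1 - Real.log t) t := by
    intro t ht
    rw [interior_Ici] at ht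
    have ht0 : (0:ℝ) < t := lt_trans one_pos ht
    have h1 : HasDerivAt (fun r : ℝ => r * Real.log r) (Real.log t + 1) t :=
      Real.hasDerivAt_mul_log ht0.ne'
    have ha : HasDerivAt (fun r : ℝ => r - 1) 1 t := (hasDerivAt_id t).sub_const 1
    have hb : HasDerivAt (fun r : ℝ => (r - 1)^2/2) (t - 1) t := by
      have h := (ha.pow 2).div_const 2
      refine h.congr_deriv ?_
      norm_num
    have h2 : HasDerivAt (fun r : ℝ => (r - 1) + (r - 1)^2/2) (1 + (t - 1)) t := ha.add hb
    have h3 := h2.sub h1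
    refine h3.congr_deriv ?_
    ring
  have hmono : MonotoneOn g (Set.Ici 1) := by
    apply monotoneOn_of_deriv_nonneg (convex_Ici 1)
    · have : Continuous g := by
        apply Continuous.sub
        · continuity
        · exact Real.continuous_mul_log
      exact this.continuousOn
    · intro t ht; exact (hd t ht).differentiableAt.differentiableWithinAt
    · intro t ht
      rw [(hd t ht).deriv]
      rw [interior_Ici] at ht
      have := Real.log_le_sub_one_of_pos (lt_trans one_pos ht)
      linarith
  have h01 := hmono (Set.mem_Ici.2 le_rfl) (Set.mem_Ici.2 hs) hs
  have hg1 : g 1 = 0 := by simp [hg]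
  have : (0:ℝ) ≤ g s := by rw [← hg1]; exact h01
  simp only [hg] at this
  linarith

lemma aux_lower {t : ℝ} (ht : 1 ≤ t) : (t - 1) - (t - 1)^2/2 ≤ Real.log t := by
  set g : ℝ → ℝ := fun r => Real.log r - (r - 1) + (r - 1)^2/2 with hg
  have hd : ∀ s ∈ interior (Set.Ici (1:ℝ)), HasDerivAt g (s⁻¹ - 1 + (s - 1)) s := by
    intro s hs
    rw [interior_Ici] at hs
    have hs0 : (0:ℝ) < s := lt_trans one_pos hs
    have h1 : HasDerivAt Real.log s⁻¹ s := Real.hasDerivAt_log hs0.ne'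
    have ha : HasDerivAt (fun r : ℝ => r - 1) 1 s := (hasDerivAt_id s).sub_const 1
    have hb : HasDerivAt (fun r : ℝ => (r - 1)^2/2) (s - 1) s := by
      have h := (ha.pow 2).div_const 2
      refine h.congr_deriv ?_
      norm_num
    exact (h1.sub ha).add hb
  have hmono : MonotoneOn g (Set.Ici 1) := by
    apply monotoneOn_of_deriv_nonneg (convex_Ici 1)
    · apply ContinuousOn.add
      apply ContinuousOn.sub
      · exact Real.continuousOn_log.mono (fun r hr => by
          simp only [Set.mem_compl_iff, Set.mem_singleton_iff]
          have : (1:ℝ) ≤ r := hr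
          intro h; rw [h] at this; linarith)
      · exact (continuous_id.sub continuous_const).continuousOn
      · exact (((continuous_id.sub continuous_const).pow 2).div_const 2).continuousOn
    · intro s hs; exact (hd s hs).differentiableAt.differentiableWithinAt
    · intro s hs
      rw [(hd s hs).deriv]
      rw [interior_Ici] at hs
      have hs0 : (0:ℝ) < s := lt_trans one_pos hs
      have he : s⁻¹ - 1 + (s - 1) = (s - 1)^2 / s := by field_simp; ring
      rw [he]; positivity
  have h01 := hmono (Set.mem_Ici.2 le_rfl) (Set.mem_Ici.2 ht) ht
  have hg1 : g 1 = 0 := by simp [hg]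
  have : (0:ℝ) ≤ g t := by rw [← hg1]; exact h01
  simp only [hg] at this
  linarith

lemma mul_log_div_le {p q c : ℝ} (hq : 0 < q) (hc : 0 < c) (hcp : c ≤ p) (hcq : c ≤ q) :
    p * Real.log (p / q) ≤ (p - q) + (p - q)^2 / (2*c) := by
  have hp : 0 < p := lt_of_lt_of_le hc hcp
  rcases le_total q p with h | h
  · have hs : 1 ≤ p / q := (one_le_div hq).2 h
    have h1 := aux_upper hs
    have e : p * Real.log (p/q) = q * ((p/q) * Real.log (p/q)) := by field_simp
    rw [e]
    have h2 : q * ((p/q) * Real.log (p/q)) ≤ q * ((p/q - 1) + (p/q - 1)^2/2) :=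
      mul_le_mul_of_nonneg_left h1 hq.le
    refine h2.trans ?_
    have e2 : q * ((p/q - 1) + (p/q - 1)^2/2) = (p - q) + (p-q)^2/(2*q) := by
      field_simp
    rw [e2]
    have h3 : (p-q)^2/(2*q) ≤ (p-q)^2/(2*c) := by
      apply div_le_div_of_nonneg_left (sq_nonneg _) (by linarith) (by linarith)
    linarith
  · have ht : 1 ≤ q / p := (one_le_div hp).2 h
    have h1 := aux_lower ht
    have e : Real.log (p/q) = - Real.log (q/p) := by
      rw [← inv_div, Real.log_inv]
    rw [e]
    have h2 : p * ((q/p - 1) - (q/p - 1)^2/2) ≤ p * Real.log (q/p) :=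
      mul_le_mul_of_nonneg_left h1 hp.le
    have e2 : p * ((q/p - 1) - (q/p - 1)^2/2) = (q - p) - (p-q)^2/(2*p) := by
      field_simp; ring
    rw [e2] at h2
    have h3 : (p-q)^2/(2*p) ≤ (p-q)^2/(2*c) := by
      apply div_le_div_of_nonneg_left (sq_nonneg _) (by linarith) (by linarith)
    linarith

lemma gibbs {m : ℕ} (u v : Fin m → ℝ) (hu : ∀ i, 0 < u i) (hv : ∀ i, 0 < v i)
    (hU : 0 < ∑ j, u j) (hV : 0 < ∑ j, v j) :
    ∑ i, u i * Real.log ((∑ j, u j) / u i) ≤ ∑ i, u i * Real.log ((∑ j, v j) / v i) := by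
  set A := ∑ j, u j with hA
  set B := ∑ j, v j with hB
  have key : ∀ i, u i - A * v i / B ≤ u i * Real.log (B / v i) - u i * Real.log (A / u i) := by
    intro i
    have h1 : 0 < B / v i := div_pos hV (hv i)
    have h2 : 0 < A / u i := div_pos hU (hu i)
    have e : Real.log (B / v i) - Real.log (A / u i) = Real.log ((B / v i) / (A / u i)) :=
      (Real.log_div h1.ne' h2.ne').symm
    have hz : 0 < (B / v i) / (A / u i) := div_pos h1 h2
    have hlb : 1 - ((B / v i) / (A / u i))⁻¹ ≤ Real.log ((B / v i) / (A / u i)) := by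
      have h := Real.log_le_sub_one_of_pos (inv_pos.2 hz)
      rw [Real.log_inv] at h
      linarith
    have einv : u i * ((B / v i) / (A / u i))⁻¹ = A * v i / B := by
      field_simp [(hu i).ne', (hv i).ne', hU.ne', hV.ne']
    calc u i - A * v i / B = u i * (1 - ((B / v i) / (A / u i))⁻¹) := by
          rw [mul_sub, mul_one, einv]
      _ ≤ u i * Real.log ((B / v i) / (A / u i)) := mul_le_mul_of_nonneg_left hlb (hu i).le
      _ = u i * Real.log (B / v i) - u i * Real.log (A / u i) := by rw [← e, mul_sub]
  have hsum := Finset.sum_le_sum (fun i (_ : i ∈ Finset.univ) => key i)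
  have hL : ∑ i, (u i - A * v i / B) = 0 := by
    rw [Finset.sum_sub_distrib]
    have e : ∀ i : Fin m, A * v i / B = A / B * v i := fun i => by ring
    rw [Finset.sum_congr rfl fun i _ => e i, ← Finset.mul_sum, ← hA, ← hB,
      div_mul_cancel₀ _ hV.ne', sub_self]
  rw [hL, Finset.sum_sub_distrib] at hsum
  linarith

lemma genEntropy_eq {m : ℕ} (z : Fin m → ℝ) (hz : ∀ i, 0 < z i) (hzS : (∑ j, z j) ≠ 0) :
    (-(∑ i, z i * Real.log (z i)) + (∑ i, z i) * Real.log (∑ i, z i)) =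
      ∑ i, z i * Real.log ((∑ j, z j) / z i) := by
  have e : ∀ i : Fin m, z i * Real.log ((∑ j, z j)/z i)
      = z i * Real.log (∑ j, z j) - z i * Real.log (z i) := fun i => by
    rw [Real.log_div hzS (hz i).ne']; ring
  rw [Finset.sum_congr rfl fun i _ => e i, Finset.sum_sub_distrib, ← Finset.sum_mul]
  ring

set_option maxHeartbeats 1000000 in
/-- If `xᵢ > ζ` for all `i` and `‖y − x‖_∞ ≤ ζ` (with `y ≥ 0`), then
`G(y) ≥ G(x) − ζ ∑ᵢ ln(‖x‖₁/xᵢ) − (ζ²/2)(∑ᵢ 1/(xᵢ−ζ) − m/(‖x‖₁/m − ζ))`;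
moreover the coefficient `∑ᵢ 1/(xᵢ−ζ) − m/(‖x‖₁/m − ζ)` is nonnegative, and it
vanishes exactly when all the `xᵢ` are equal. -/
theorem stmt5 {m : ℕ} (hm : 1 ≤ m) (ζ : ℝ) (hζ : 0 < ζ)
    (x y : Fin m → ℝ) (hy : ∀ i, 0 ≤ y i) (hx : ∀ i, ζ < x i)
    (hclose : ∀ i, |y i - x i| ≤ ζ) :
    genEntropy y ≥
      genEntropy x - (∑ i, Real.log ((∑ j, x j) / x i)) * ζ
        - 1 / 2 * ((∑ i, 1 / (x i - ζ)) - m / ((∑ j, x j) / m - ζ)) * ζ ^ 2 ∧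
    0 ≤ (∑ i, 1 / (x i - ζ)) - m / ((∑ j, x j) / m - ζ) ∧
    ((∑ i, 1 / (x i - ζ)) - m / ((∑ j, x j) / m - ζ) = 0 ↔ ∀ i j, x i = x j) := by
  haveI : Nonempty (Fin m) := ⟨⟨0, hm⟩⟩
  have hm0 : (0:ℝ) < m := by exact_mod_cast hm
  set S := ∑ j, x j with hSdef
  set T := ∑ i, 1 / (x i - ζ) with hTdef
  have hxpos : ∀ i, 0 < x i := fun i => hζ.trans (hx i)
  have hu : ∀ i, 0 < x i - ζ := fun i => sub_pos.2 (hx i)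
  have hypos : ∀ i, 0 < y i := fun i => by
    have h := (abs_le.1 (hclose i)).1
    have := hx i; linarith
  have hS : 0 < S := by
    rw [hSdef]; exact Finset.sum_pos (fun i _ => hxpos i) Finset.univ_nonempty
  set U := S - (m:ℝ)*ζ with hUdef
  have hUsum : ∑ i, (x i - ζ) = U := by
    rw [Finset.sum_sub_distrib, Finset.sum_const, Finset.card_univ, Fintype.card_fin,
      nsmul_eq_mul, hUdef, hSdef]
  have hUpos : 0 < U := by
    rw [← hUsum]; exact Finset.sum_pos (fun i _ => hu i) Finset.univ_nonempty
  have hUS : U ≤ S := by rw [hUdef]; nlinarith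
  have hSe : S = U + (m:ℝ)*ζ := by rw [hUdef]; ring
  have hS0 : U + (m:ℝ)*ζ ≠ 0 := by rw [← hSe]; exact hS.ne'
  have hMS : (m:ℝ) / (S / (m:ℝ) - ζ) = (m:ℝ)^2 / U := by
    have e : S / (m:ℝ) - ζ = U / (m:ℝ) := by
      rw [hUdef]; field_simp
    rw [e, div_div_eq_mul_div]; ring
  rw [hMS]
  have perij : ∀ i j : Fin m, ((x i - ζ) - (x j - ζ))^2 / ((x i - ζ) * (x j - ζ))
      = (x i - ζ) * (1/(x j - ζ)) + (x j - ζ) * (1/(x i - ζ)) - 2 := by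
    intro i j
    field_simp [(hu i).ne', (hu j).ne']
    ring
  have hinner : ∀ i : Fin m, (∑ j, ((x i - ζ) - (x j - ζ))^2 / ((x i - ζ) * (x j - ζ)))
      = (x i - ζ) * T + U * (1/(x i - ζ)) - 2*(m:ℝ) := by
    intro i
    rw [Finset.sum_congr rfl fun j _ => perij i j]
    simp only [Finset.sum_sub_distrib, Finset.sum_add_distrib, ← Finset.mul_sum,
      ← Finset.sum_mul, Finset.sum_const, Finset.card_univ, Fintype.card_fin, nsmul_eq_mul]
    rw [← hTdef, ← hSdef, ← hUdef]
    ring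
  have hdouble : (∑ i, ∑ j, ((x i - ζ) - (x j - ζ))^2 / ((x i - ζ) * (x j - ζ)))
      = 2*(U*T - (m:ℝ)^2) := by
    rw [Finset.sum_congr rfl fun i _ => hinner i]
    simp only [Finset.sum_sub_distrib, Finset.sum_add_distrib, ← Finset.mul_sum,
      ← Finset.sum_mul, Finset.sum_const, Finset.card_univ, Fintype.card_fin, nsmul_eq_mul]
    rw [← hTdef, ← hSdef, ← hUdef]
    ring
  have hdnn : ∀ i : Fin m, (0:ℝ) ≤ ∑ j, ((x i - ζ) - (x j - ζ))^2 / ((x i - ζ) * (x j - ζ)) :=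
    fun i => Finset.sum_nonneg fun j _ => div_nonneg (sq_nonneg _) (mul_pos (hu i) (hu j)).le
  have hQnn : 0 ≤ U*T - (m:ℝ)^2 := by
    have h := Finset.sum_nonneg (fun i (_ : i ∈ Finset.univ) => hdnn i)
    rw [hdouble] at h; linarith
  refine ⟨?_, ?_, ?_⟩
  · -- main inequality
    set SY := ∑ j, y j with hSYdef
    have hSY : 0 < SY := by
      rw [hSYdef]; exact Finset.sum_pos (fun i _ => hypos i) Finset.univ_nonempty
    have hGy : genEntropy y = ∑ i, y i * Real.log (SY / y i) := by
      simp only [genEntropy]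
      rw [genEntropy_eq y hypos (by rw [← hSYdef]; exact hSY.ne'), ← hSYdef]
    have hc2 : ∑ i, (x i - ζ) * Real.log (SY / y i) ≤ genEntropy y := by
      rw [hGy]
      apply Finset.sum_le_sum
      intro i _
      apply mul_le_mul_of_nonneg_right
      · have := (abs_le.1 (hclose i)).1; linarith
      · apply Real.log_nonneg
        rw [le_div_iff₀ (hypos i), one_mul, hSYdef]
        exact Finset.single_le_sum (fun j _ => (hypos j).le) (Finset.mem_univ i)
    have hc3 : ∑ i, (x i - ζ) * Real.log (U / (x i - ζ)) ≤
        ∑ i, (x i - ζ) * Real.log (SY / y i) := by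
      have h := gibbs (fun i => x i - ζ) y hu hypos
        (by rw [hUsum]; exact hUpos) (by rw [← hSYdef]; exact hSY)
      rw [hUsum, ← hSYdef] at h
      exact h
    have hstep : ∀ i, (x i - ζ) * Real.log (S * (x i - ζ) / (x i * U)) ≤
        ((x i - ζ) - U * (x i / S)) + ζ^2*((m:ℝ)*(x i - ζ) - U)^2/(2*U*S*(x i - ζ)) := by
      intro i
      have hcp : (x i - ζ)/S ≤ (x i - ζ)/U :=
        div_le_div_of_nonneg_left (hu i).le hUpos hUS
      have hcq : (x i - ζ)/S ≤ x i/S := (div_le_div_iff_of_pos_right hS).2 (by linarith [hζ])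
      have h := mul_log_div_le (p := (x i - ζ)/U) (q := x i/S) (c := (x i - ζ)/S)
        (div_pos (hxpos i) hS) (div_pos (hu i) hS) hcp hcq
      have hpq : ((x i - ζ)/U) / (x i / S) = S * (x i - ζ)/(x i * U) := by
        field_simp [(hxpos i).ne', hUpos.ne', hS.ne']
      rw [hpq] at h
      have h2 := mul_le_mul_of_nonneg_left h hUpos.le
      have eL : U * ((x i - ζ)/U * Real.log (S * (x i - ζ)/(x i * U)))
          = (x i - ζ) * Real.log (S * (x i - ζ)/(x i * U)) := by
        field_simp
      have eR : U * (((x i - ζ)/U - x i/S) + ((x i - ζ)/U - x i/S)^2/(2*((x i - ζ)/S)))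
          = ((x i - ζ) - U * (x i / S)) + ζ^2*((m:ℝ)*(x i - ζ) - U)^2/(2*U*S*(x i - ζ)) := by
        rw [hSe]
        field_simp [hUpos.ne', (hxpos i).ne', (hu i).ne', hS0]
        ring
      rw [eL, eR] at h2
      exact h2
    have hs4 := Finset.sum_le_sum (fun i (_ : i ∈ Finset.univ) => hstep i)
    rw [Finset.sum_add_distrib] at hs4
    have hfirst : ∑ i, ((x i - ζ) - U * (x i / S)) = 0 := by
      rw [Finset.sum_sub_distrib, hUsum]
      have e : ∀ i : Fin m, U * (x i / S) = (U / S) * x i := fun i => by ring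
      rw [Finset.sum_congr rfl fun i _ => e i, ← Finset.mul_sum, ← hSdef,
        div_mul_cancel₀ _ hS.ne', sub_self]
    have hsecond : ∑ i, ζ^2*((m:ℝ)*(x i - ζ) - U)^2/(2*U*S*(x i - ζ))
        = ζ^2/(2*U*S) * ((m:ℝ)^2*U - 2*(m:ℝ)*U*(m:ℝ) + U^2*T) := by
      have e : ∀ i : Fin m, ζ^2*((m:ℝ)*(x i - ζ) - U)^2/(2*U*S*(x i - ζ))
          = ζ^2/(2*U*S) * ((m:ℝ)^2*(x i - ζ) - 2*(m:ℝ)*U + U^2 * (1/(x i - ζ))) := by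
        intro i
        field_simp [(hu i).ne', hUpos.ne', hS.ne']
        ring
      rw [Finset.sum_congr rfl fun i _ => e i, ← Finset.mul_sum]
      congr 1
      simp only [Finset.sum_sub_distrib, Finset.sum_add_distrib, ← Finset.mul_sum,
        Finset.sum_const, Finset.card_univ, Fintype.card_fin, nsmul_eq_mul]
      rw [← hTdef, ← hSdef, ← hUdef]
      ring
    have hbound : ζ^2/(2*U*S) * ((m:ℝ)^2*U - 2*(m:ℝ)*U*(m:ℝ) + U^2*T)
        ≤ ζ^2/2*(T - (m:ℝ)^2/U) := by
      have e1 : ζ^2/(2*U*S) * ((m:ℝ)^2*U - 2*(m:ℝ)*U*(m:ℝ) + U^2*T)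
          = ζ^2*(U*T - (m:ℝ)^2) / (2*S) := by
        field_simp
        ring
      have e2 : ζ^2/2*(T - (m:ℝ)^2/U) = ζ^2*(U*T - (m:ℝ)^2) / (2*U) := by
        field_simp
      rw [e1, e2]
      exact div_le_div_of_nonneg_left (mul_nonneg (sq_nonneg ζ) hQnn) (by linarith) (by linarith)
    have hc4 : ∑ i, (x i - ζ) * Real.log (S * (x i - ζ) / (x i * U))
        ≤ ζ^2/2*(T - (m:ℝ)^2/U) := by
      rw [hfirst, hsecond] at hs4
      linarith [hbound]
    have hsplit : ∀ i : Fin m, (x i - ζ) * Real.log (U / (x i - ζ))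
        = (x i - ζ) * Real.log (S / x i)
          - (x i - ζ) * Real.log (S * (x i - ζ) / (x i * U)) := by
      intro i
      rw [← mul_sub]
      congr 1
      rw [← Real.log_div (div_pos hS (hxpos i)).ne'
        (div_pos (mul_pos hS (hu i)) (mul_pos (hxpos i) hUpos)).ne']
      congr 1
      field_simp [(hxpos i).ne', (hu i).ne', hUpos.ne', hS.ne']
    have hGxsum : ∑ i, (x i - ζ) * Real.log (S / x i)
        = genEntropy x - (∑ i, Real.log (S / x i)) * ζ := by
      have hGx : genEntropy x = ∑ i, x i * Real.log (S / x i) := by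
        simp only [genEntropy]
        rw [genEntropy_eq x hxpos (by rw [← hSdef]; exact hS.ne'), ← hSdef]
      have e : ∀ i : Fin m, (x i - ζ) * Real.log (S / x i)
          = x i * Real.log (S / x i) - ζ * Real.log (S / x i) := fun i => by ring
      rw [Finset.sum_congr rfl fun i _ => e i, Finset.sum_sub_distrib, ← Finset.mul_sum, ← hGx]
      ring
    have hfin : genEntropy x - (∑ i, Real.log (S / x i)) * ζ - ζ^2/2*(T - (m:ℝ)^2/U)
        ≤ ∑ i, (x i - ζ) * Real.log (U / (x i - ζ)) := by
      rw [Finset.sum_congr rfl fun i _ => hsplit i, Finset.sum_sub_distrib, hGxsum]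
      linarith [hc4]
    linarith [hc2, hc3, hfin]
  · rw [sub_nonneg, div_le_iff₀ hUpos]
    linarith [hQnn]
  · constructor
    · intro h
      have hUT : U*T = (m:ℝ)^2 := by
        have hT' : T = (m:ℝ)^2 / U := by linarith
        rw [hT', mul_div_cancel₀ _ hUpos.ne']
      have hzero : (∑ i, ∑ j, ((x i - ζ) - (x j - ζ))^2 / ((x i - ζ) * (x j - ζ))) = 0 := by
        rw [hdouble, hUT]; ring
      intro i j
      have h1 := (Finset.sum_eq_zero_iff_of_nonneg
        (fun i _ => hdnn i)).1 hzero i (Finset.mem_univ i)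
      have h2 := (Finset.sum_eq_zero_iff_of_nonneg
        (fun j _ => div_nonneg (sq_nonneg _) (mul_pos (hu i) (hu j)).le)).1 h1 j
        (Finset.mem_univ j)
      rw [div_eq_zero_iff] at h2
      rcases h2 with h2 | h2
      · have h3 : (x i - ζ) - (x j - ζ) = 0 := by
          exact pow_eq_zero_iff (by norm_num : 2 ≠ 0) |>.1 h2
        linarith
      · exact absurd h2 (mul_pos (hu i) (hu j)).ne'
    · intro h
      have hzero : (∑ i, ∑ j, ((x i - ζ) - (x j - ζ))^2 / ((x i - ζ) * (x j - ζ))) = 0 :=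
        Finset.sum_eq_zero fun i _ => Finset.sum_eq_zero fun j _ => by
          rw [h i j]; simp
      rw [hdouble] at hzero
      rw [sub_eq_zero, eq_div_iff hUpos.ne']
      linarith
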